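/- Let $S$ be a set of $n$ noncollinear points in the plane such that at most $\ell$ points of $S$ are collinear, with $\ell \le n/2$ or a line containing $n/2$ points. If $S$ determines $\Omega(n^2)$ distinct segments lying on lines spanned by $S$ (as guaranteed by Beck's theorem), then $S$ determines at least $\Omega(n^2(n-\ell))$ nondegenerate triangles. -/

import Mathlib

open Finset

open Classical in
noncomputable def triFam (F : Finset (Fin 2 → ℝ)) : Finset (Finset (Fin 2 → ℝ)) :=
  (F.powersetCard 3).filter (fun t => ¬ Collinear ℝ (↑t : Set (Fin 2 → ℝ)))

open Classical in
lemma setfam_eq {X : Type*} {S : Set X} (hfin : S.Finite) (k : ℕ) (hk : 0 < k)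
    (P : Set X → Prop) :
    {T : Set X | T ⊆ S ∧ T.ncard = k ∧ P T} =
      (fun t : Finset X => (↑t : Set X)) ''
        (((hfin.toFinset.powersetCard k).filter (fun t : Finset X => P (↑t : Set X)) :
          Finset (Finset X)) : Set (Finset X)) := by
  ext T
  simp only [Set.mem_image, Finset.mem_coe, Finset.mem_filter, Set.mem_setOf_eq,
    Finset.mem_powersetCard]
  constructor
  · rintro ⟨hTS, hkc, hP⟩
    have hTfin : T.Finite := Set.finite_of_ncard_ne_zero (by omega)
    refine ⟨hTfin.toFinset, ⟨⟨?_, ?_⟩, ?_⟩, by simp⟩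
    · intro x hx
      rw [Set.Finite.mem_toFinset] at hx
      rw [Set.Finite.mem_toFinset]
      exact hTS hx
    · rw [← Set.ncard_eq_toFinset_card _ hTfin]; exact hkc
    · rw [Set.Finite.coe_toFinset]; exact hP
  · rintro ⟨t, ⟨⟨hts, htc⟩, hP⟩, rfl⟩
    refine ⟨?_, by rw [Set.ncard_coe_finset]; exact htc, hP⟩
    intro x hx
    have := hts (by simpa using hx)
    rw [Set.Finite.mem_toFinset] at this
    exact this

open Classical in
lemma setfam_ncard {X : Type*} {S : Set X} (hfin : S.Finite) (k : ℕ) (hk : 0 < k)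
    (P : Set X → Prop) :
    {T : Set X | T ⊆ S ∧ T.ncard = k ∧ P T}.ncard =
      ((hfin.toFinset.powersetCard k).filter (fun t : Finset X => P (↑t : Set X))).card := by
  rw [setfam_eq hfin k hk P, Set.ncard_image_of_injective _ Finset.coe_injective,
    Set.ncard_coe_finset]

open Classical in
lemma count_key {S : Set (Fin 2 → ℝ)} (hfin : S.Finite) {n ℓ : ℕ} (hn : S.ncard = n)
    (hcol : ∀ T : Set (Fin 2 → ℝ), T ⊆ S → Collinear ℝ T → T.ncard ≤ ℓ) :
    (hfin.toFinset.powersetCard 2).card * (n - ℓ) ≤ 3 * (triFam hfin.toFinset).card := by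
  set F := hfin.toFinset with hF
  have hFcard : F.card = n := by rw [hF, ← Set.ncard_eq_toFinset_card _ hfin]; exact hn
  set Ps := F.powersetCard 2 with hPs
  set Ts := triFam F with hTs
  -- Step 1: each pair extends to at least n - ℓ triangles
  have step1 : ∀ p ∈ Ps, (n - ℓ) ≤ (Ts.filter (fun t => p ⊆ t)).card := by
    intro p hp
    rw [hPs, Finset.mem_powersetCard] at hp
    obtain ⟨hpF, hpc⟩ := hp
    obtain ⟨a, b, hab, rfl⟩ := Finset.card_eq_two.mp hpc
    set B := F.filter (fun x => Collinear ℝ (insert x ({a, b} : Set (Fin 2 → ℝ)))) with hB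
    have hBcol : Collinear ℝ (↑B : Set (Fin 2 → ℝ)) := by
      rw [collinear_iff_exists_forall_eq_smul_vadd]
      refine ⟨a, b -ᵥ a, fun x hx => ?_⟩
      simp only [hB, Finset.coe_filter, Set.mem_setOf_eq] at hx
      have hline : x ∈ line[ℝ, a, b] :=
        hx.2.mem_affineSpan_of_mem_of_ne (Set.mem_insert_of_mem _ (Set.mem_insert _ _))
          (Set.mem_insert_of_mem _ (Set.mem_insert_of_mem _ rfl)) (Set.mem_insert _ _) hab
      have hx' : (x -ᵥ a) +ᵥ a ∈ line[ℝ, a, b] := by simpa using hline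
      obtain ⟨r, hr⟩ := vadd_left_mem_affineSpan_pair.mp hx'
      exact ⟨r, by rw [hr]; simp⟩
    have hBS : (↑B : Set (Fin 2 → ℝ)) ⊆ S := by
      intro x hx
      simp only [hB, Finset.coe_filter, Set.mem_setOf_eq] at hx
      have := hx.1; rw [hF, Set.Finite.mem_toFinset] at this; exact this
    have hBcard : B.card ≤ ℓ := by
      have := hcol ↑B hBS hBcol
      rwa [Set.ncard_coe_finset] at this
    have hBsub : B ⊆ F := Finset.filter_subset _ _
    have hG : n - ℓ ≤ (F \ B).card := by
      rw [Finset.card_sdiff_of_subset hBsub, hFcard]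
      omega
    refine le_trans hG (Finset.card_le_card_of_injOn (fun x => insert x {a, b}) ?_ ?_)
    · intro x hx
      rw [Finset.mem_coe, Finset.mem_sdiff] at hx
      obtain ⟨hxF, hxB⟩ := hx
      have hxnc : ¬ Collinear ℝ (insert x ({a, b} : Set (Fin 2 → ℝ))) := by
        intro h; exact hxB (by simp only [hB, Finset.mem_filter]; exact ⟨hxF, h⟩)
      have hxp : x ∉ ({a, b} : Finset (Fin 2 → ℝ)) := by
        intro h
        apply hxnc
        have he : insert x ({a, b} : Set (Fin 2 → ℝ)) = {a, b} := by
          apply Set.insert_eq_self.mpr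
          simpa using h
        rw [he]; exact collinear_pair ℝ a b
      simp only [Finset.mem_coe, Finset.mem_filter, hTs, triFam, Finset.mem_powersetCard]
      refine ⟨⟨⟨?_, ?_⟩, ?_⟩, ?_⟩
      · exact Finset.insert_subset hxF hpF
      · rw [Finset.card_insert_of_notMem hxp, hpc]
      · intro h; apply hxnc; simpa using h
      · exact Finset.subset_insert _ _
    · intro x hx y hy hxy
      rw [Finset.mem_coe, Finset.mem_sdiff] at hx hy
      have hxp : x ∉ ({a, b} : Finset (Fin 2 → ℝ)) := by
        intro h
        apply hx.2
        simp only [hB, Finset.mem_filter]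
        refine ⟨hx.1, ?_⟩
        have he : insert x ({a, b} : Set (Fin 2 → ℝ)) = {a, b} := by
          apply Set.insert_eq_self.mpr; simpa using h
        rw [he]; exact collinear_pair ℝ a b
      have hxy' : insert x ({a, b} : Finset (Fin 2 → ℝ)) = insert y {a, b} := hxy
      have hm : x ∈ insert y ({a, b} : Finset (Fin 2 → ℝ)) := by
        rw [← hxy']; exact Finset.mem_insert_self _ _
      rcases Finset.mem_insert.mp hm with h | h
      · exact h
      · exact absurd h hxp
  -- Step 2: double counting
  have step2 : ∑ p ∈ Ps, (Ts.filter (fun t => p ⊆ t)).card =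
      ∑ t ∈ Ts, (Ps.filter (fun p => p ⊆ t)).card := by
    simp_rw [Finset.card_filter]
    exact Finset.sum_comm
  -- Step 3: each triangle contains at most 3 pairs
  have step3 : ∀ t ∈ Ts, (Ps.filter (fun p => p ⊆ t)).card ≤ 3 := by
    intro t ht
    rw [hTs, triFam, Finset.mem_filter, Finset.mem_powersetCard] at ht
    have hsub : Ps.filter (fun p => p ⊆ t) ⊆ t.powersetCard 2 := by
      intro p hp
      rw [Finset.mem_filter, hPs, Finset.mem_powersetCard] at hp
      rw [Finset.mem_powersetCard]
      exact ⟨hp.2, hp.1.2⟩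
    calc (Ps.filter (fun p => p ⊆ t)).card ≤ (t.powersetCard 2).card :=
          Finset.card_le_card hsub
      _ = Nat.choose 3 2 := by rw [Finset.card_powersetCard, ht.1.2]
      _ = 3 := by norm_num
  calc Ps.card * (n - ℓ) = ∑ _p ∈ Ps, (n - ℓ) := by rw [Finset.sum_const, smul_eq_mul]
    _ ≤ ∑ p ∈ Ps, (Ts.filter (fun t => p ⊆ t)).card := Finset.sum_le_sum step1
    _ = ∑ t ∈ Ts, (Ps.filter (fun p => p ⊆ t)).card := step2
    _ ≤ ∑ _t ∈ Ts, 3 := Finset.sum_le_sum step3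
    _ = 3 * Ts.card := by rw [Finset.sum_const, smul_eq_mul, mul_comm]

/-- a set of `n` noncollinear points in the plane, with at most
`ℓ` points collinear, determining `Ω(n²)` distinct segments, determines at
least `Ω(n² (n - ℓ))` nondegenerate triangles. -/
theorem stmt5 (c1 : ℝ) (hc1 : 0 < c1) :
    ∃ c : ℝ, 0 < c ∧
      ∀ (n ℓ : ℕ) (S : Set (Fin 2 → ℝ)), S.Finite → S.ncard = n →
        ¬ Collinear ℝ S →
        (∀ T : Set (Fin 2 → ℝ), T ⊆ S → Collinear ℝ T → T.ncard ≤ ℓ) →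
        ((ℓ : ℝ) ≤ n / 2 ∨
          ∃ T : Set (Fin 2 → ℝ), T ⊆ S ∧ Collinear ℝ T ∧ (n : ℝ) / 2 ≤ T.ncard) →
        c1 * n ^ 2 ≤ ({P : Set (Fin 2 → ℝ) | P ⊆ S ∧ P.ncard = 2}.ncard : ℝ) →
        c * n ^ 2 * ((n - ℓ : ℕ) : ℝ) ≤
          ({T : Set (Fin 2 → ℝ) | T ⊆ S ∧ T.ncard = 3 ∧ ¬ Collinear ℝ T}.ncard : ℝ) := by
  classical
  refine ⟨c1 / 3, by positivity, ?_⟩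
  intro n ℓ S hfin hn _ hcol _ hpairs
  have hPeq : {P : Set (Fin 2 → ℝ) | P ⊆ S ∧ P.ncard = 2}.ncard =
      (hfin.toFinset.powersetCard 2).card := by
    have he : {P : Set (Fin 2 → ℝ) | P ⊆ S ∧ P.ncard = 2} =
        {T : Set (Fin 2 → ℝ) | T ⊆ S ∧ T.ncard = 2 ∧ True} := by
      ext T; simp
    rw [he, setfam_ncard hfin 2 (by norm_num) (fun _ => True)]
    congr 1
    simp
  have hTeq : {T : Set (Fin 2 → ℝ) | T ⊆ S ∧ T.ncard = 3 ∧ ¬ Collinear ℝ T}.ncard =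
      (triFam hfin.toFinset).card := by
    rw [setfam_ncard hfin 3 (by norm_num) (fun T => ¬ Collinear ℝ T)]
    exact congrArg Finset.card (Finset.filter_congr_decidable ..)
  have key := count_key hfin hn hcol
  rw [hPeq] at hpairs
  rw [hTeq]
  have key' : ((hfin.toFinset.powersetCard 2).card : ℝ) * ((n - ℓ : ℕ) : ℝ) ≤
      3 * ((triFam hfin.toFinset).card : ℝ) := by exact_mod_cast key
  have hnl : (0 : ℝ) ≤ ((n - ℓ : ℕ) : ℝ) := Nat.cast_nonneg _
  nlinarith [mul_le_mul_of_nonneg_right hpairs hnl]
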